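/- Masked Domain Adaptation Theorem: Let P be the original data distribution with true labeling f, let P' denote the pseudo-labeled original domain (distribution P with pseudo-labels ŷ) and Q' the pseudo-labeled masked domain (distribution Q with pseudo-labels ŷ_Q), where the pseudo-label noise ratio is at most γ on both domains, i.e., P({ŷ ≠ f}) ≤ γ and Q({ŷ_Q ≠ f_Q}) ≤ γ with f_Q the true labeling on Q. Then for every h ∈ H: ε_P(h, f) ≤ (1/2)ε_P(h, ŷ) + (1/2)ε_Q(h, ŷ_Q) + (1/4)d_{HΔH}(P, Q) + (1/2)λ + γ, where λ = inf_{h' ∈ H}(ε_P(h', f) + ε_Q(h', f_Q)). -/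
import Mathlib


open MeasureTheory

/-- Disagreement error of two hypotheses/labelings under a distribution D. -/
noncomputable def errD {X : Type*} [MeasurableSpace X]
    (D : Measure X) (h g : X → Bool) : ℝ :=
  (D {x | h x ≠ g x}).toReal

/-- The HΔH-divergence between probability measures P and Q over a hypothesis class H. -/
noncomputable def dHDH {X : Type*} [MeasurableSpace X]
    (H : Set (X → Bool)) (P Q : Measure X) : ℝ :=
  2 * sSup {r : ℝ | ∃ h ∈ H, ∃ h' ∈ H, r = |errD P h h' - errD Q h h'|}

lemma errD_symm {X : Type*} [MeasurableSpace X] (D : Measure X) (h g : X → Bool) :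
    errD D h g = errD D g h := by
  unfold errD
  have : {x | h x ≠ g x} = {x | g x ≠ h x} := by ext x; exact ne_comm
  rw [this]

lemma errD_triangle {X : Type*} [MeasurableSpace X] (D : Measure X)
    [IsFiniteMeasure D] (a b c : X → Bool) :
    errD D a b ≤ errD D a c + errD D c b := by
  unfold errD
  have hsub : {x | a x ≠ b x} ⊆ {x | a x ≠ c x} ∪ {x | c x ≠ b x} := by
    intro x hx
    by_cases h1 : a x = c x
    · right; intro h2; exact hx (h1.trans h2)
    · left; exact h1
  calc (D {x | a x ≠ b x}).toReal
      ≤ (D ({x | a x ≠ c x} ∪ {x | c x ≠ b x})).toReal := by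
        apply ENNReal.toReal_mono (measure_ne_top _ _) (measure_mono hsub)
    _ ≤ (D {x | a x ≠ c x} + D {x | c x ≠ b x}).toReal := by
        apply ENNReal.toReal_mono
        · exact ENNReal.add_ne_top.mpr ⟨measure_ne_top _ _, measure_ne_top _ _⟩
        · exact measure_union_le _ _
    _ = _ := ENNReal.toReal_add (measure_ne_top _ _) (measure_ne_top _ _)

lemma errD_le_one {X : Type*} [MeasurableSpace X] (D : Measure X)
    [IsProbabilityMeasure D] (a b : X → Bool) : errD D a b ≤ 1 := by
  unfold errD
  rw [show (1:ℝ) = (D Set.univ).toReal by simp]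
  exact ENNReal.toReal_mono (measure_ne_top _ _) (measure_mono (Set.subset_univ _))

lemma errD_nonneg {X : Type*} [MeasurableSpace X] (D : Measure X) (a b : X → Bool) :
    0 ≤ errD D a b := ENNReal.toReal_nonneg


/-- Masked Domain Adaptation Theorem:
ε_P(h, f) ≤ (1/2)ε_P(h, ŷ) + (1/2)ε_Q(h, ŷ_Q) + (1/4)d_{HΔH}(P,Q) + (1/2)λ + γ. -/
theorem masked_domain_adaptation {X : Type*} [MeasurableSpace X]
    (H : Set (X → Bool)) (P Q : Measure X)
    [IsProbabilityMeasure P] [IsProbabilityMeasure Q]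
    (f fQ yhat yhatQ : X → Bool)
    (hmf : Measurable f) (hmfQ : Measurable fQ)
    (hmy : Measurable yhat) (hmyQ : Measurable yhatQ)
    (hmeas : ∀ h ∈ H, Measurable h)
    (γ : ℝ)
    (hnoiseP : (P {x | yhat x ≠ f x}).toReal ≤ γ)
    (hnoiseQ : (Q {x | yhatQ x ≠ fQ x}).toReal ≤ γ)
    (h : X → Bool) (hH : h ∈ H)
    (lam : ℝ) (hstar : X → Bool) (hstarH : hstar ∈ H)
    (hlam_eq : lam = errD P hstar f + errD Q hstar fQ)
    (hlam_min : ∀ h' ∈ H, lam ≤ errD P h' f + errD Q h' fQ) :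
    errD P h f ≤ (1 / 2) * errD P h yhat + (1 / 2) * errD Q h yhatQ
      + (1 / 4) * dHDH H P Q + (1 / 2) * lam + γ := by
  have hnP : errD P yhat f ≤ γ := hnoiseP
  have hnQ : errD Q yhatQ fQ ≤ γ := hnoiseQ
  -- Bound A: errD P h f ≤ errD P h yhat + γ
  have hA : errD P h f ≤ errD P h yhat + γ := by
    have := errD_triangle P h f yhat
    have hs : errD P yhat f = errD P f yhat := errD_symm P yhat f
    linarith [errD_triangle P h f yhat]
  -- sSup bound
  set S := {r : ℝ | ∃ h ∈ H, ∃ h' ∈ H, r = |errD P h h' - errD Q h h'|} with hS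
  have hbdd : BddAbove S := by
    refine ⟨1, ?_⟩
    rintro r ⟨a, _, b, _, rfl⟩
    rw [abs_le]
    constructor <;>
      nlinarith [errD_le_one P a b, errD_le_one Q a b, errD_nonneg P a b, errD_nonneg Q a b]
  have hmem : |errD P h hstar - errD Q h hstar| ∈ S := ⟨h, hH, hstar, hstarH, rfl⟩
  have hsup : errD P h hstar - errD Q h hstar ≤ sSup S :=
    le_trans (le_abs_self _) (le_csSup hbdd hmem)
  have hd : dHDH H P Q = 2 * sSup S := rfl
  -- Bound B
  have hB : errD P h f ≤ errD Q h yhatQ + γ + lam + (1/2) * dHDH H P Q := by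
    have t1 := errD_triangle P h f hstar
    have t2 : errD P h hstar ≤ errD Q h hstar + (1/2) * dHDH H P Q := by
      rw [hd]; linarith
    have t3 := errD_triangle Q h hstar fQ
    have t4 := errD_triangle Q h fQ yhatQ
    have s1 : errD P hstar f = errD P f hstar := errD_symm P hstar f
    have s2 : errD Q fQ hstar = errD Q hstar fQ := errD_symm Q fQ hstar
    have s3 : errD Q yhatQ fQ = errD Q fQ yhatQ := errD_symm Q yhatQ fQ
    linarith
  linarith
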